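/- Let G be a connected graph without cut vertices that has a separation pair {u, v}, let C be a connected component of G - {u, v}, and let C' be the graph obtained from G[V(C) ∪ {u, v}] by adding the edge {u, v} if absent. Then C' is a topological minor of G. -/

import Mathlib

open SimpleGraph

variable {V : Type*}

/-- Reachability within the subgraph of `G` induced by the vertex set `W`. -/
def ReachIn (G : SimpleGraph V) (W : Set V) (x y : V) : Prop :=
  ∃ (hx : x ∈ W) (hy : y ∈ W), (G.induce W).Reachable ⟨x, hx⟩ ⟨y, hy⟩

/-- Removing `S` disconnects some connected component of `G`: there are two vertices
outside `S` that are connected in `G` but not in `G - S`. -/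
def Separates (G : SimpleGraph V) (S : Set V) : Prop :=
  ∃ u v : V, u ∉ S ∧ v ∉ S ∧ G.Reachable u v ∧ ¬ ReachIn G Sᶜ u v

/-- `S` is a minimal separator of `G`. -/
def IsMinimalSeparator (G : SimpleGraph V) (S : Set V) : Prop :=
  Separates G S ∧ ∀ S' ⊂ S, ¬ Separates G S'

/-- `C` is a connected component of the subgraph of `G` induced by `W`. -/
def IsCompOf (G : SimpleGraph V) (C W : Set V) : Prop :=
  C ⊆ W ∧ (G.induce C).Connected ∧ ∀ u ∈ C, ∀ v ∈ W, G.Adj u v → v ∈ C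

/-- A separation `(A, B)` of a graph `G`. -/
def IsSeparation (G : SimpleGraph V) (A B : Set V) : Prop :=
  A ∪ B = Set.univ ∧ ∀ u ∈ A \ B, ∀ v ∈ B \ A, ¬ G.Adj u v

/-- `(T, X)` is a tree decomposition of `G`. -/
structure IsTreeDecomp {ι : Type*} (G : SimpleGraph V) (T : SimpleGraph ι)
    (X : ι → Set V) : Prop where
  isTree : T.IsTree
  covers_verts : ∀ v : V, ∃ i, v ∈ X i
  covers_edges : ∀ ⦃u v : V⦄, G.Adj u v → ∃ i, u ∈ X i ∧ v ∈ X i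
  subtree : ∀ v : V, (T.induce {i | v ∈ X i}).Connected

/-- The tree decomposition given by the bag function `X` has adhesion at most `d`. -/
def AdhesionLE {ι : Type*} (T : SimpleGraph ι) (X : ι → Set V) (d : ℕ) : Prop :=
  ∀ ⦃i j : ι⦄, T.Adj i j → (X i ∩ X j).ncard ≤ d

/-- The torso of the vertex set `W` in `G`: the induced subgraph `G[W]` with an edge added
between each pair of vertices of `W` connected by a path internally avoiding `W`. -/
def torso (G : SimpleGraph V) (W : Set V) : SimpleGraph W :=
  SimpleGraph.fromRel (fun u v =>
    G.Adj u v ∨ ∃ p : G.Walk (u : V) (v : V), p.IsPath ∧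
      ∀ z ∈ p.support, z ≠ (u : V) → z ≠ (v : V) → z ∉ W)

/-- One smoothing step: `K` is obtained from `H` by replacing the degree-2 vertex `v`,
whose two neighbors are `a` and `b`, by a direct edge between `a` and `b`. -/
def SmoothStep (H K : SimpleGraph.Subgraph (⊤ : SimpleGraph V)) : Prop :=
  ∃ v a b : V, a ≠ b ∧ a ≠ v ∧ b ≠ v ∧ v ∈ H.verts ∧ H.neighborSet v = {a, b} ∧
    K.verts = H.verts \ {v} ∧
    ∀ x y : V, K.Adj x y ↔ ((H.Adj x y ∧ x ≠ v ∧ y ≠ v) ∨ (x = a ∧ y = b) ∨ (x = b ∧ y = a))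

/-- `K` (a graph on a subset of the vertices of `G`) is a topological minor of `G`:
it is obtained from a subgraph of `G` by repeatedly smoothing degree-2 vertices. -/
def IsTopMinor (K : SimpleGraph.Subgraph (⊤ : SimpleGraph V)) (G : SimpleGraph V) : Prop :=
  ∃ H₀ : SimpleGraph.Subgraph (⊤ : SimpleGraph V),
    (∀ ⦃x y : V⦄, H₀.Adj x y → G.Adj x y) ∧ Relation.ReflTransGen SmoothStep H₀ K

/-- An abstract graph `H` is a topological minor of `G` if it is isomorphic to some
topological minor of `G`. -/
def IsTopMinorGraph {W : Type*} (H : SimpleGraph W) (G : SimpleGraph V) : Prop :=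
  ∃ K : SimpleGraph.Subgraph (⊤ : SimpleGraph V), IsTopMinor K G ∧ Nonempty (H ≃g K.coe)

/-- One edge-contraction step: `K` is obtained from `H` by contracting the edge `{a, b}`
(the vertex `b` is merged into `a`). -/
def ContractStep (H K : SimpleGraph.Subgraph (⊤ : SimpleGraph V)) : Prop :=
  ∃ a b : V, H.Adj a b ∧ K.verts = H.verts \ {b} ∧
    ∀ x y : V, K.Adj x y ↔ (x ≠ b ∧ y ≠ b ∧ x ≠ y ∧
      (H.Adj x y ∨ (x = a ∧ H.Adj b y) ∨ (y = a ∧ H.Adj x b)))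

/-- `G` contains `Hpat` as a minor: some graph obtained from a subgraph of `G` by
contracting edges is isomorphic to `Hpat`. -/
def HasMinor {W : Type*} (G : SimpleGraph V) (Hpat : SimpleGraph W) : Prop :=
  ∃ H₀ K : SimpleGraph.Subgraph (⊤ : SimpleGraph V),
    (∀ ⦃x y : V⦄, H₀.Adj x y → G.Adj x y) ∧ Relation.ReflTransGen ContractStep H₀ K ∧
      Nonempty (Hpat ≃g K.coe)

/-- Planarity, via Wagner's theorem: no `K₅`-minor and no `K₃,₃`-minor. -/
def IsPlanar (G : SimpleGraph V) : Prop :=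
  ¬ HasMinor G (completeGraph (Fin 5)) ∧ ¬ HasMinor G (completeBipartiteGraph (Fin 3) (Fin 3))

/-- A graph is triconnected if removing fewer than three vertices cannot disconnect it. -/
def Triconnected (G : SimpleGraph V) : Prop :=
  ∀ S : Set V, S.ncard < 3 → (G.induce Sᶜ).Preconnected

/-- A graph is claw-free if it has no induced `K_{1,3}`. -/
def ClawFree (G : SimpleGraph V) : Prop :=
  ∀ v a b c : V, G.Adj v a → G.Adj v b → G.Adj v c → a ≠ b → a ≠ c → b ≠ c →
    ¬ G.Adj a b → ¬ G.Adj a c → G.Adj b c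

/-- The graph `C'` obtained from `G[V(C) ∪ {u, v}]` by adding the edge `{u, v}`
if it is absent. -/
def CPrime (G : SimpleGraph V) (C : Set V) (u v : V) : SimpleGraph ↥(C ∪ {u, v}) :=
  SimpleGraph.fromRel (fun a b => G.Adj a b ∨ ((a : V) = u ∧ (b : V) = v))
namespace CPrimeAux

open SimpleGraph Walk

variable {V : Type*} (G : SimpleGraph V)

/-- The target subgraph `K`: induced on `S` plus the edge `{u,v}`. -/
def Kg (S : Set V) (u v : V) (hu : u ∈ S) (hv : v ∈ S) (huv : u ≠ v) :
    SimpleGraph.Subgraph (⊤ : SimpleGraph V) where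
  verts := S
  Adj x y := (x ∈ S ∧ y ∈ S ∧ G.Adj x y) ∨ s(x, y) = s(u, v)
  adj_sub := by
    rintro x y (⟨-, -, h⟩ | h)
    · simpa using h.ne
    · rcases Sym2.eq_iff.mp h with ⟨rfl, rfl⟩ | ⟨rfl, rfl⟩
      · simpa using huv
      · simpa using huv.symm
  edge_vert := by
    rintro x y (⟨hx, -, -⟩ | h)
    · exact hx
    · rcases Sym2.eq_iff.mp h with ⟨rfl, -⟩ | ⟨rfl, -⟩
      · exact hu
      · exact hv
  symm := by
    refine ⟨?_⟩
    rintro x y (⟨hx, hy, h⟩ | h)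
    · exact Or.inl ⟨hy, hx, h.symm⟩
    · exact Or.inr (by rwa [Sym2.eq_swap])

/-- The intermediate subgraph: induced on `S`, plus a path `q` from `w` to `v`,
plus a synthetic edge `{u, w}`. -/
def Jg (S : Set V) (u : V) {w v : V} (q : G.Walk w v) (hu : u ∈ S)
    (huw : u ≠ w) : SimpleGraph.Subgraph (⊤ : SimpleGraph V) where
  verts := S ∪ {z | z ∈ q.support}
  Adj x y := (x ∈ S ∧ y ∈ S ∧ G.Adj x y) ∨ s(x, y) ∈ q.edges ∨ s(x, y) = s(u, w)
  adj_sub := by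
    rintro x y (⟨-, -, h⟩ | h | h)
    · simpa using h.ne
    · simpa using (q.adj_of_mem_edges h).ne
    · rcases Sym2.eq_iff.mp h with ⟨rfl, rfl⟩ | ⟨rfl, rfl⟩
      · simpa using huw
      · simpa using huw.symm
  edge_vert := by
    rintro x y (⟨hx, -, -⟩ | h | h)
    · exact Or.inl hx
    · exact Or.inr (q.fst_mem_support_of_mem_edges h)
    · rcases Sym2.eq_iff.mp h with ⟨rfl, -⟩ | ⟨rfl, -⟩
      · exact Or.inl hu
      · exact Or.inr q.start_mem_support
  symm := by
    refine ⟨?_⟩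
    rintro x y (⟨hx, hy, h⟩ | h | h)
    · exact Or.inl ⟨hy, hx, h.symm⟩
    · exact Or.inr (Or.inl (by rwa [Sym2.eq_swap]))
    · exact Or.inr (Or.inr (by rwa [Sym2.eq_swap]))

lemma Jg_nil (S : Set V) (u v : V) (hu : u ∈ S) (hv : v ∈ S) (huv : u ≠ v) :
    Jg G S u (Walk.nil : G.Walk v v) hu huv = Kg G S u v hu hv huv := by
  ext x y
  · show x ∈ S ∪ {z | z ∈ (Walk.nil : G.Walk v v).support} ↔ x ∈ S
    simp only [Walk.support_nil, Set.mem_union, Set.mem_setOf_eq, List.mem_singleton]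
    constructor
    · rintro (h | rfl)
      · exact h
      · exact hv
    · exact Or.inl
  · show _ ∨ s(x, y) ∈ (Walk.nil : G.Walk v v).edges ∨ _ ↔ _ ∨ _
    simp [Walk.edges_nil]


lemma Jg_to_K (S : Set V) {u : V} (hu : u ∈ S) :
    ∀ {w v : V} (q : G.Walk w v) (hv : v ∈ S) (huv : u ≠ v) (huw : u ≠ w), q.IsPath → u ∉ q.support →
      (∀ z ∈ q.support, z ≠ v → z ∉ S) →
      Relation.ReflTransGen SmoothStep (Jg G S u q hu huw) (Kg G S u v hu hv huv) := by
  intro w v q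
  induction q with
  | nil =>
    intro hv huv huw _ _ _
    rw [Jg_nil G S u _ hu hv]
  | @cons w w₂ v h r ih =>
    intro hv huv huw hq hus hSs
    have hqr : r.IsPath := hq.of_cons
    have hwr : w ∉ r.support := ((Walk.cons_isPath_iff h r).mp hq).2
    have hur : u ∉ r.support := fun hx => hus (by simp [hx])
    have huw₂ : u ≠ w₂ := fun e => hur (e ▸ r.start_mem_support)
    have hwv : w ≠ v := fun e => hwr (e ▸ r.end_mem_support)
    have hwS : w ∉ S := hSs w (by simp) hwv
    have hw₂w : w₂ ≠ w := h.ne'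
    refine Relation.ReflTransGen.head (b := Jg G S u r hu huw₂) ?_
      (ih hv huv huw₂ hqr hur fun z hz hzv => hSs z (by simp [hz]) hzv)
    refine ⟨w, u, w₂, huw₂, huw, hw₂w, Or.inr (by simp), ?_, ?_, ?_⟩
    · -- neighborSet
      ext x
      show (_ ∨ s(w, x) ∈ (Walk.cons h r).edges ∨ _) ↔ x ∈ ({u, w₂} : Set V)
      simp only [Set.mem_insert_iff, Set.mem_singleton_iff, Walk.edges_cons, List.mem_cons]
      constructor
      · rintro (⟨hwS', -, -⟩ | (he | he) | he)
        · exact absurd hwS' hwS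
        · rcases Sym2.eq_iff.mp he with ⟨-, rfl⟩ | ⟨hww₂, rfl⟩
          · exact Or.inr rfl
          · exact absurd hww₂.symm hw₂w
        · exact absurd (r.fst_mem_support_of_mem_edges he) hwr
        · rcases Sym2.eq_iff.mp he with ⟨hwu, -⟩ | ⟨-, rfl⟩
          · exact absurd hwu.symm huw
          · exact Or.inl rfl
      · rintro (rfl | rfl)
        · exact Or.inr (Or.inr (Sym2.eq_swap))
        · exact Or.inr (Or.inl (Or.inl rfl))
    · -- verts
      show (S ∪ {z | z ∈ r.support}) = (S ∪ {z | z ∈ (Walk.cons h r).support}) \ {w}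
      ext z
      simp only [Set.mem_union, Set.mem_setOf_eq, Walk.support_cons, List.mem_cons,
        Set.mem_diff, Set.mem_singleton_iff]
      constructor
      · rintro (hz | hz)
        · exact ⟨Or.inl hz, fun e => hwS (e ▸ hz)⟩
        · exact ⟨Or.inr (Or.inr hz), fun e => hwr (e ▸ hz)⟩
      · rintro ⟨hz | (rfl | hz), hne⟩
        · exact Or.inl hz
        · exact absurd rfl hne
        · exact Or.inr hz
    · -- adjacency
      intro x y
      show (_ ∨ s(x, y) ∈ r.edges ∨ s(x, y) = s(u, w₂)) ↔ _
      constructor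
      · rintro (⟨hx, hy, hxy⟩ | he | he)
        · exact Or.inl ⟨Or.inl ⟨hx, hy, hxy⟩, fun e => hwS (e ▸ hx), fun e => hwS (e ▸ hy)⟩
        · refine Or.inl ⟨Or.inr (Or.inl ((Walk.edges_cons h r) ▸ List.mem_cons_of_mem _ he)), ?_, ?_⟩
          · exact fun e => hwr (e ▸ r.fst_mem_support_of_mem_edges he)
          · exact fun e => hwr (e ▸ r.snd_mem_support_of_mem_edges he)
        · rcases Sym2.eq_iff.mp he with ⟨rfl, rfl⟩ | ⟨rfl, rfl⟩
          · exact Or.inr (Or.inl ⟨rfl, rfl⟩)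
          · exact Or.inr (Or.inr ⟨rfl, rfl⟩)
      · rintro (⟨(⟨hx, hy, hxy⟩ | he | he), hxw, hyw⟩ | ⟨rfl, rfl⟩ | ⟨rfl, rfl⟩)
        · exact Or.inl ⟨hx, hy, hxy⟩
        · rcases List.mem_cons.mp ((Walk.edges_cons h r) ▸ he) with he' | he'
          · rcases Sym2.eq_iff.mp he' with ⟨hxw', -⟩ | ⟨-, hyw'⟩
            · exact absurd hxw' hxw
            · exact absurd hyw' hyw
          · exact Or.inr (Or.inl he')
        · rcases Sym2.eq_iff.mp he with ⟨-, hyw'⟩ | ⟨hxw', -⟩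
          · exact absurd hyw' hyw
          · exact absurd hxw' hxw
        · exact Or.inr (Or.inr rfl)
        · exact Or.inr (Or.inr Sym2.eq_swap)
lemma topMinor_of_path {u v : V} (huv : u ≠ v) (C : Set V)
    (p : G.Walk u v) (hp : p.IsPath)
    (hint : ∀ z ∈ p.support, z ≠ u → z ≠ v → z ∉ C ∪ {u, v}) :
    IsTopMinorGraph (CPrime G C u v) G := by
  have hu : u ∈ C ∪ ({u, v} : Set V) := Or.inr (Or.inl rfl)
  have hv : v ∈ C ∪ ({u, v} : Set V) := Or.inr (Or.inr rfl)
  cases p with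
  | nil => exact absurd rfl huv
  | @cons _ w _ h r =>
    have hur : u ∉ r.support := ((Walk.cons_isPath_iff h r).mp hp).2
    refine ⟨Kg G (C ∪ {u, v}) u v hu hv huv,
      ⟨Jg G (C ∪ {u, v}) u r hu h.ne, ?_, ?_⟩, ⟨?_⟩⟩
    · rintro x y (⟨-, -, hxy⟩ | he | he)
      · exact hxy
      · exact r.adj_of_mem_edges he
      · rcases Sym2.eq_iff.mp he with ⟨rfl, rfl⟩ | ⟨rfl, rfl⟩
        · exact h
        · exact h.symm
    · refine Jg_to_K G (C ∪ {u, v}) hu r hv huv h.ne hp.of_cons hur fun z hz hzv => ?_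
      exact hint z (by simp [hz]) (fun e => hur (e ▸ hz)) hzv
    · refine ⟨Equiv.refl _, ?_⟩
      intro a b
      show (Kg G (C ∪ {u, v}) u v hu hv huv).Adj ↑a ↑b ↔ (CPrime G C u v).Adj a b
      rw [CPrime, SimpleGraph.fromRel_adj]
      show ((↑a ∈ C ∪ {u, v} ∧ ↑b ∈ C ∪ {u, v} ∧ G.Adj ↑a ↑b) ∨ s((a : V), (b : V)) = s(u, v)) ↔ _
      constructor
      · rintro (⟨-, -, hxy⟩ | he)
        · exact ⟨fun e => hxy.ne (congrArg _ e), Or.inl (Or.inl hxy)⟩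
        · rcases Sym2.eq_iff.mp he with ⟨ha, hb⟩ | ⟨ha, hb⟩
          · exact ⟨Subtype.coe_ne_coe.mp (by rw [ha, hb]; exact huv), Or.inl (Or.inr ⟨ha, hb⟩)⟩
          · exact ⟨Subtype.coe_ne_coe.mp (by rw [ha, hb]; exact huv.symm), Or.inr (Or.inr ⟨hb, ha⟩)⟩
      · rintro ⟨hne, (hxy | ⟨ha, hb⟩) | (hxy | ⟨hb, ha⟩)⟩
        · exact Or.inl ⟨a.2, b.2, hxy⟩
        · exact Or.inr (by rw [ha, hb])
        · exact Or.inl ⟨a.2, b.2, hxy.symm⟩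
        · exact Or.inr (by rw [ha, hb, Sym2.eq_swap])
/-- Inclusion homomorphism between induced subgraphs. -/
def inclHom {A B : Set V} (h : A ⊆ B) : G.induce A →g G.induce B where
  toFun a := ⟨a.1, h a.2⟩
  map_rel' := fun ha => ha

/-- Homomorphism from an induced subgraph to the ambient graph. -/
def valHom (W : Set V) : G.induce W →g G where
  toFun := Subtype.val
  map_rel' := fun ha => ha

lemma walk_support_closed {W P : Set V}
    (hcl : ∀ z ∈ P, ∀ z' ∈ W, G.Adj z z' → z' ∈ P) :
    ∀ {s t : ↥W} (q : (G.induce W).Walk s t), (s : V) ∈ P →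
      ∀ z ∈ q.support, (z : V) ∈ P := by
  intro s t q
  induction q with
  | nil =>
    intro hs z hz
    rw [Walk.support_nil, List.mem_singleton] at hz
    exact hz ▸ hs
  | @cons s s' t h r ih =>
    intro hs z hz
    have hs' : (s' : V) ∈ P := hcl _ hs _ s'.2 h
    rw [Walk.support_cons, List.mem_cons] at hz
    rcases hz with rfl | hz
    · exact hs
    · exact ih hs' z hz

lemma walk_closed {W P : Set V}
    (hcl : ∀ z ∈ P, ∀ z' ∈ W, G.Adj z z' → z' ∈ P)
    {s t : ↥W} (q : (G.induce W).Walk s t) (hs : (s : V) ∈ P) : (t : V) ∈ P :=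
  walk_support_closed G hcl q hs t q.end_mem_support

lemma exists_nbr (hconn : G.Connected) (hnocut : ∀ w : V, ¬ Separates G {w})
    {u v : V} (huv : u ≠ v) {D : Set V} (hDT : D ⊆ ({u, v} : Set V)ᶜ)
    (hDcl : ∀ z ∈ D, ∀ z' ∈ ({u, v} : Set V)ᶜ, G.Adj z z' → z' ∈ D)
    {w₀ : V} (hw₀ : w₀ ∈ D) : ∃ a ∈ D, G.Adj u a := by
  by_contra hno
  push_neg at hno
  apply hnocut v
  have hw₀uv := hDT hw₀
  simp only [Set.mem_compl_iff, Set.mem_insert_iff, Set.mem_singleton_iff, not_or] at hw₀uv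
  have key : ∀ {s t : ↥(({v} : Set V)ᶜ)} (q : (G.induce ({v} : Set V)ᶜ).Walk s t),
      (s : V) ∈ D → (t : V) ∈ D := by
    intro s t q
    induction q with
    | nil => exact id
    | @cons s s' t h r ih =>
      intro hs
      by_cases he : (s' : V) = u
      · exact absurd (he ▸ (h : G.Adj (s : V) (s' : V))) (hno _ hs ∘ Adj.symm)
      · refine ih (hDcl _ hs _ ?_ h)
        simp only [Set.mem_compl_iff, Set.mem_insert_iff, Set.mem_singleton_iff, not_or]
        exact ⟨he, fun hv' => s'.2 (by simp [hv'])⟩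
  refine ⟨w₀, u, by simp [hw₀uv.2], by simp [huv], hconn.preconnected w₀ u, ?_⟩
  rintro ⟨h1, h2, hr⟩
  obtain ⟨q⟩ := hr
  have : (u : V) ∈ D := key q hw₀
  simpa using hDT this
end CPrimeAux

/-- For a connected graph without cut vertices with separation pair `{u, v}` and a
component `C` of `G - {u, v}`, the graph `C'` is a topological minor of `G`. -/
theorem CPrime_topMinor [Fintype V] (G : SimpleGraph V)
    (hconn : G.Connected) (hnocut : ∀ w : V, ¬ Separates G {w})
    (u v : V) (huv : u ≠ v) (hsp : Separates G {u, v})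
    (C : Set V) (hC : IsCompOf G C {u, v}ᶜ) :
    IsTopMinorGraph (CPrime G C u v) G := by
  classical
  obtain ⟨hCsub, hCconn, hCcl⟩ := hC
  by_cases hadj : G.Adj u v
  · refine CPrimeAux.topMinor_of_path G huv C (Walk.cons hadj Walk.nil) ?_ ?_
    · rw [Walk.cons_isPath_iff]
      exact ⟨Walk.IsPath.nil, by simp [huv]⟩
    · intro z hz hzu hzv
      rw [Walk.support_cons, Walk.support_nil, List.mem_cons, List.mem_singleton] at hz
      rcases hz with rfl | rfl
      · exact absurd rfl hzu
      · exact absurd rfl hzv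
  · obtain ⟨x, y, hx, hy, hxyR, hxyN⟩ := hsp
    have hxT : x ∈ ({u, v} : Set V)ᶜ := hx
    have hyT : y ∈ ({u, v} : Set V)ᶜ := hy
    have hw₀ex : ∃ w₀, w₀ ∈ ({u, v} : Set V)ᶜ ∧ w₀ ∉ C := by
      by_contra hcon
      push_neg at hcon
      exact hxyN ⟨hxT, hyT, Reachable.map (CPrimeAux.inclHom G hCsub)
        (hCconn.preconnected ⟨x, hcon x hxT⟩ ⟨y, hcon y hyT⟩)⟩
    obtain ⟨w₀, hw₀T, hw₀C⟩ := hw₀ex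
    set D : Set V := {z | ∃ hz : z ∈ ({u, v} : Set V)ᶜ,
      (G.induce ({u, v} : Set V)ᶜ).Reachable ⟨w₀, hw₀T⟩ ⟨z, hz⟩} with hDdef
    have hDT : D ⊆ ({u, v} : Set V)ᶜ := fun z hz => hz.1
    have hw₀D : w₀ ∈ D := ⟨hw₀T, Reachable.refl _⟩
    have hDcl : ∀ z ∈ D, ∀ z' ∈ ({u, v} : Set V)ᶜ, G.Adj z z' → z' ∈ D := by
      rintro z ⟨hzT, hzR⟩ z' hz'T ha
      exact ⟨hz'T, hzR.trans (Adj.reachable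
        (show (G.induce ({u, v} : Set V)ᶜ).Adj ⟨z, hzT⟩ ⟨z', hz'T⟩ from ha))⟩
    have hDC : ∀ z ∈ D, z ∉ C := by
      rintro z ⟨hzT, hzR⟩ hzC
      obtain ⟨q⟩ := hzR.symm
      exact hw₀C (CPrimeAux.walk_closed G hCcl q hzC)
    obtain ⟨a, haD, hua⟩ := CPrimeAux.exists_nbr G hconn hnocut huv hDT hDcl hw₀D
    have hDT' : D ⊆ ({v, u} : Set V)ᶜ := by rw [Set.pair_comm v u]; exact hDT
    have hDcl' : ∀ z ∈ D, ∀ z' ∈ ({v, u} : Set V)ᶜ, G.Adj z z' → z' ∈ D := by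
      intro z hz z' hz' ha
      exact hDcl z hz z' (by rwa [Set.pair_comm v u] at hz') ha
    obtain ⟨b, hbD, hvb⟩ := CPrimeAux.exists_nbr G hconn hnocut huv.symm hDT' hDcl' hw₀D
    obtain ⟨q⟩ := haD.2.symm.trans hbD.2
    have hqD : ∀ z ∈ q.support, (z : V) ∈ D :=
      CPrimeAux.walk_support_closed G hDcl q haD
    let wab : G.Walk a b := q.map (CPrimeAux.valHom G _)
    have hwabD : ∀ z ∈ wab.support, z ∈ D := by
      intro z hz
      have hz2 : z ∈ (q.map (CPrimeAux.valHom G _)).support := hz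
      rw [Walk.support_map] at hz2
      obtain ⟨z₀, hz₀, rfl⟩ := List.mem_map.mp hz2
      exact hqD z₀ hz₀
    let fw : G.Walk u v := Walk.cons hua (wab.append (Walk.cons hvb.symm Walk.nil))
    refine CPrimeAux.topMinor_of_path G huv C fw.toPath fw.toPath.2 ?_
    intro z hz hzu hzv
    have hz' : z ∈ fw.support := Walk.support_toPath_subset fw hz
    have hzD : z ∈ D := by
      rw [Walk.support_cons, List.mem_cons] at hz'
      rcases hz' with rfl | hz'
      · exact absurd rfl hzu
      · rw [Walk.mem_support_append_iff] at hz'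
        rcases hz' with hz' | hz'
        · exact hwabD z hz'
        · rw [Walk.support_cons, Walk.support_nil, List.mem_cons, List.mem_singleton] at hz'
          rcases hz' with rfl | rfl
          · exact hbD
          · exact absurd rfl hzv
    rintro (hzC | hzuv)
    · exact hDC z hzD hzC
    · rcases hzuv with rfl | rfl
      · exact absurd rfl hzu
      · exact absurd rfl hzv
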